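/- Let R = [[r₁₁, r₁₂],[0, r₂₂]] be upper triangular with r₁₁ > 0, and let φ satisfy tan(2φ) = 2 r₁₂ r₂₂/(r₁₁² + r₁₂² − r₂₂²) with |φ| ≤ π/4. Define ψ by tan ψ = (r₁₂ + r₂₂ tan φ)/r₁₁. Then the matrix U_φᵀ R V_ψ is diagonal, with diagonal entries σ₁ = r₁₁·(sec ψ/sec φ) and σ₂ = r₂₂·(sec φ/sec ψ). -/

import Mathlib

open Matrix Real

/-- Exact SVD of an upper triangular 2×2 matrix `R` with `r₁₁ > 0`: if
`tan(2φ) = 2r₁₂r₂₂/(r₁₁² + r₁₂² − r₂₂²)` with `|φ| ≤ π/4`, and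
`tan ψ = (r₁₂ + r₂₂ tan φ)/r₁₁`, then `U_φᵀ R V_ψ` is diagonal with entries
`σ₁ = r₁₁·(sec ψ/sec φ)` and `σ₂ = r₂₂·(sec φ/sec ψ)`. -/
theorem stmt_12 (r₁₁ r₁₂ r₂₂ φ ψ : ℝ)
    (hr : 0 < r₁₁)
    (hden : r₁₁ ^ 2 + r₁₂ ^ 2 - r₂₂ ^ 2 ≠ 0)
    (hφ : |φ| ≤ π / 4) (hc2φ : Real.cos (2 * φ) ≠ 0)
    (htan2φ : Real.tan (2 * φ) = 2 * r₁₂ * r₂₂ / (r₁₁ ^ 2 + r₁₂ ^ 2 - r₂₂ ^ 2))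
    (hcφ : 0 < Real.cos φ) (hcψ : 0 < Real.cos ψ)
    (htanψ : Real.tan ψ = (r₁₂ + r₂₂ * Real.tan φ) / r₁₁) :
    (!![Real.cos φ, -Real.sin φ; Real.sin φ, Real.cos φ])ᵀ *
        !![r₁₁, r₁₂; 0, r₂₂] *
        !![Real.cos ψ, -Real.sin ψ; Real.sin ψ, Real.cos ψ] =
      !![r₁₁ * ((1 / Real.cos ψ) / (1 / Real.cos φ)), 0;
         0, r₂₂ * ((1 / Real.cos φ) / (1 / Real.cos ψ))] := by
  have hcφ' : Real.cos φ ≠ 0 := ne_of_gt hcφ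
  have hcψ' : Real.cos ψ ≠ 0 := ne_of_gt hcψ
  have hr' : r₁₁ ≠ 0 := ne_of_gt hr
  set cφ := Real.cos φ; set sφ := Real.sin φ
  set cψ := Real.cos ψ; set sψ := Real.sin ψ
  -- key relation from tan ψ
  have E1 : r₁₁ * cφ * sψ = (r₁₂ * cφ + r₂₂ * sφ) * cψ := by
    rw [Real.tan_eq_sin_div_cos, Real.tan_eq_sin_div_cos] at htanψ
    change sψ / cψ = (r₁₂ + r₂₂ * (sφ / cφ)) / r₁₁ at htanψ
    field_simp at htanψ
    linarith [htanψ]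
  -- key relation from tan 2φ
  have E2 : sφ * cφ * (r₁₁ ^ 2 + r₁₂ ^ 2 - r₂₂ ^ 2) = (cφ ^ 2 - sφ ^ 2) * (r₁₂ * r₂₂) := by
    rw [Real.tan_eq_sin_div_cos, Real.sin_two_mul, Real.cos_two_mul'] at htan2φ
    rw [Real.cos_two_mul'] at hc2φ
    field_simp at htan2φ
    linear_combination htan2φ
  have P : sψ ^ 2 + cψ ^ 2 = 1 := by
    have := Real.sin_sq_add_cos_sq ψ; linarith
  have Pφ : sφ ^ 2 + cφ ^ 2 = 1 := by
    have := Real.sin_sq_add_cos_sq φ; linarith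
  ext i j
  fin_cases i <;> fin_cases j <;>
      simp only [Matrix.mul_apply, Fin.sum_univ_succ, Matrix.transpose_apply,
        Matrix.cons_val', Matrix.cons_val_zero, Matrix.cons_val_one, Matrix.head_cons,
        Matrix.head_fin_const, Matrix.empty_val', Matrix.cons_val_fin_one,
        Fin.sum_univ_zero, Fin.isValue, add_zero, Matrix.of_apply, Fin.zero_eta,
        Fin.mk_one, Fin.succ_zero_eq_one] <;>
    field_simp
  · linear_combination -sψ * E1 + r₁₁ * cφ * P
  · linear_combination -E1
  · have key : (r₁₁ * cφ) * (-(sφ * r₁₁ * cψ) + (-(sφ * r₁₂) + cφ * r₂₂) * sψ) = 0 := by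
      linear_combination (-(sφ*r₁₂) + cφ*r₂₂) * E1 - cψ * E2
    rcases mul_eq_zero.1 key with h | h
    · exact absurd h (mul_ne_zero hr' hcφ')
    · linarith [h]
  · linear_combination sφ * E1 + r₂₂ * cψ * Pφ
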